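/- (Decay of the stationary corrector coefficients under exponential nonresonance.) Let h₀ ≥ α₀ > 0, V₀ ∈ ℝ^d with |V₀| ≤ M, and suppose |(V₀·k)² − |k| tanh(h₀|k|)| > δ e^{−h̄|k|} for all k ∈ ℤ^d\{0}, with 0 < h̄ < α₀. Then the coefficients F_k := (V₀·k)² sech(h₀|k|)/||k| tanh(h₀|k|) − (V₀·k)²| satisfy F_k ≤ C(M, δ, α₀, h̄) |k|² e^{−(α₀−h̄)|k|} for all k ≠ 0; in particular ∑_{k≠0} (1+|k|²)^s F_k² < ∞ for every s ≥ 0, so the locally stationary corrector ζ₁ with ζ̂_{1,k} = −F_k b̂_k (up to sign) belongs to H^s(𝕋^d) whenever b ∈ L²(𝕋^d). -/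

import Mathlib

open Real

noncomputable section

/-- Euclidean norm of an integer frequency vector `k ∈ ℤ^d`. -/
def knorm (d : ℕ) (k : Fin d → ℤ) : ℝ := Real.sqrt (∑ i, ((k i : ℝ)) ^ 2)

lemma knorm_nonneg (d : ℕ) (k : Fin d → ℤ) : 0 ≤ knorm d k := Real.sqrt_nonneg _

lemma sq_knorm (d : ℕ) (k : Fin d → ℤ) : knorm d k ^ 2 = ∑ i, ((k i : ℝ)) ^ 2 :=
  Real.sq_sqrt (by positivity)

lemma abs_le_knorm (d : ℕ) (k : Fin d → ℤ) (i : Fin d) : |(k i : ℝ)| ≤ knorm d k := by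
  rw [← Real.sqrt_sq_eq_abs]
  exact Real.sqrt_le_sqrt (Finset.single_le_sum
    (f := fun j => ((k j : ℝ)) ^ 2) (fun j _ => by positivity) (Finset.mem_univ i))

lemma sum_abs_le (d : ℕ) (k : Fin d → ℤ) : ∑ i, |(k i : ℝ)| ≤ d * knorm d k := by
  calc ∑ i, |(k i : ℝ)| ≤ ∑ _i : Fin d, knorm d k :=
        Finset.sum_le_sum fun i _ => abs_le_knorm d k i
    _ = d * knorm d k := by simp [Finset.sum_const, nsmul_eq_mul]

lemma summable_exp_int (c : ℝ) (hc : 0 < c) :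
    Summable fun n : ℤ => Real.exp (-c * |(n : ℝ)|) := by
  have key : ∀ n : ℕ, Real.exp (-c * |((n : ℤ) : ℝ)|) = Real.exp (-c) ^ n := by
    intro n
    rw [← Real.exp_nat_mul]
    push_cast
    rw [abs_of_nonneg (by positivity : (0:ℝ) ≤ (n:ℝ))]
    ring_nf
  have hgeo : Summable fun n : ℕ => Real.exp (-c) ^ n :=
    summable_geometric_of_lt_one (le_of_lt (Real.exp_pos _)) (by
      rw [Real.exp_lt_one_iff]; linarith)
  apply Summable.of_nat_of_neg
  · exact hgeo.congr fun n => (key n).symm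
  · refine hgeo.congr fun n => ?_
    rw [← key n]
    push_cast
    rw [abs_neg]

lemma summable_exp_pi (d : ℕ) (c : ℝ) (hc : 0 < c) :
    Summable fun k : Fin d → ℤ => ∏ i, Real.exp (-c * |(k i : ℝ)|) := by
  induction d with
  | zero => exact Summable.of_finite
  | succ n ih =>
    rw [← (Fin.consEquiv (fun _ : Fin (n + 1) => ℤ)).summable_iff]
    have : ((fun k : Fin (n+1) → ℤ => ∏ i, Real.exp (-c * |(k i : ℝ)|)) ∘
        (Fin.consEquiv (fun _ : Fin (n + 1) => ℤ))) =
        fun p : ℤ × (Fin n → ℤ) =>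
          Real.exp (-c * |(p.1 : ℝ)|) * ∏ i, Real.exp (-c * |(p.2 i : ℝ)|) := by
      funext p
      simp [Fin.consEquiv, Fin.prod_univ_succ]
    rw [this]
    exact Summable.mul_of_nonneg (f := fun m : ℤ => Real.exp (-c * |(m : ℝ)|))
      (g := fun q : Fin n → ℤ => ∏ i, Real.exp (-c * |(q i : ℝ)|)) (summable_exp_int c hc) ih
      (fun _ => (Real.exp_pos _).le) (fun _ => Finset.prod_nonneg fun _ _ => (Real.exp_pos _).le)

lemma one_add_pow_mul_exp_le (m : ℕ) (ε : ℝ) (hε : 0 < ε) (x : ℝ) (hx : 0 ≤ x) :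
    (1 + x) ^ m * Real.exp (-ε * x) ≤ (1 + m / ε) ^ m := by
  rcases Nat.eq_zero_or_pos m with hm | hm
  · subst hm
    simpa using Real.exp_le_one_iff.mpr (by nlinarith : -ε * x ≤ 0)
  · have hm0 : (0:ℝ) < m := by exact_mod_cast hm
    have h1 : ε * x / m + 1 ≤ Real.exp (ε * x / m) := by
      have := Real.add_one_le_exp (ε * x / m); linarith
    have hstep : 1 + x ≤ (1 + m / ε) * Real.exp (ε * x / m) := by
      have h2 : (1 + m / ε) * (ε * x / m + 1) ≤ (1 + m / ε) * Real.exp (ε * x / m) := by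
        apply mul_le_mul_of_nonneg_left h1; positivity
      have h3 : (1 + m / ε) * (ε * x / m + 1) = 1 + ε * x / m + m / ε + x := by
        field_simp; ring
      nlinarith [div_nonneg (mul_nonneg hε.le hx) hm0.le, div_nonneg hm0.le hε.le]
    calc (1 + x) ^ m * Real.exp (-ε * x)
        ≤ ((1 + m / ε) * Real.exp (ε * x / m)) ^ m * Real.exp (-ε * x) := by
          apply mul_le_mul_of_nonneg_right (pow_le_pow_left₀ (by linarith) hstep m)
            (Real.exp_pos _).le
      _ = (1 + m / ε) ^ m * (Real.exp (ε * x / m) ^ m * Real.exp (-ε * x)) := by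
          rw [mul_pow]; ring
      _ = (1 + m / ε) ^ m := by
          rw [← Real.exp_nat_mul, ← Real.exp_add]
          have : (m : ℝ) * (ε * x / m) + -ε * x = 0 := by field_simp; ring
          rw [this, Real.exp_zero, mul_one]

lemma weight_bound (s ε : ℝ) (hs : 0 ≤ s) (hε : 0 < ε) :
    ∃ A > (0:ℝ), ∀ x : ℝ, 0 ≤ x → (1 + x ^ 2) ^ s * x ^ 4 * Real.exp (-ε * x) ≤ A := by
  set n := ⌈s⌉₊ with hn
  refine ⟨(1 + (2 * n + 4) / ε) ^ (2 * n + 4), by positivity, fun x hx => ?_⟩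
  have h1 : (1 + x ^ 2) ^ s ≤ (1 + x ^ 2) ^ (n : ℝ) :=
    Real.rpow_le_rpow_of_exponent_le (by nlinarith) (Nat.le_ceil s)
  rw [Real.rpow_natCast] at h1
  have h2 : (1 + x ^ 2) ^ n ≤ (1 + x) ^ (2 * n) := by
    rw [pow_mul]
    exact pow_le_pow_left₀ (by nlinarith) (by nlinarith) n
  have h3 : x ^ 4 ≤ (1 + x) ^ 4 := pow_le_pow_left₀ hx (by linarith) 4
  calc (1 + x ^ 2) ^ s * x ^ 4 * Real.exp (-ε * x)
      ≤ (1 + x) ^ (2 * n) * (1 + x) ^ 4 * Real.exp (-ε * x) := by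
        apply mul_le_mul_of_nonneg_right _ (Real.exp_pos _).le
        exact mul_le_mul (h1.trans h2) h3 (by positivity) (by positivity)
    _ = (1 + x) ^ (2 * n + 4) * Real.exp (-ε * x) := by rw [← pow_add]
    _ ≤ _ := by
        have := one_add_pow_mul_exp_le (2 * n + 4) ε hε x hx
        simpa using this


/-- Decay of the stationary corrector coefficients under exponential
nonresonance: the coefficients
`F_k = (V₀·k)² sech(h₀|k|)/||k|tanh(h₀|k|) − (V₀·k)²|` decay like
`|k|² e^{−(α₀−h̄)|k|}`, so that `∑ (1+|k|²)^s F_k² < ∞` for every `s ≥ 0` and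
the stationary corrector `ζ₁` with `ζ̂₁ₖ = −F_k b̂ₖ` (up to sign) lies in
`H^s(𝕋^d)` whenever `b ∈ L²(𝕋^d)`. -/
theorem stationary_corrector_decay (d : ℕ) (α₀ hbar δ M h₀ : ℝ)
    (hα : 0 < α₀) (hh : α₀ ≤ h₀) (hhbar : 0 < hbar) (hbarlt : hbar < α₀)
    (hδ : 0 < δ) (hM : 0 ≤ M) :
    ∃ C > (0:ℝ), ∀ V : Fin d → ℝ, ‖fun i => V i‖ ≤ M →
      -- exponential nonresonance
      (∀ k : Fin d → ℤ, k ≠ 0 →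
        δ * Real.exp (-hbar * knorm d k) <
          |(∑ i, (k i : ℝ) * V i) ^ 2 - knorm d k * Real.tanh (h₀ * knorm d k)|) →
      ∀ F : (Fin d → ℤ) → ℝ,
      (F 0 = 0) →
      (∀ k : Fin d → ℤ, k ≠ 0 →
        F k = (∑ i, (k i : ℝ) * V i) ^ 2 * (1 / Real.cosh (h₀ * knorm d k)) /
          |knorm d k * Real.tanh (h₀ * knorm d k) - (∑ i, (k i : ℝ) * V i) ^ 2|) →
      -- pointwise decay of the coefficients
      ((∀ k : Fin d → ℤ, k ≠ 0 →
          F k ≤ C * knorm d k ^ 2 * Real.exp (-(α₀ - hbar) * knorm d k)) ∧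
        -- weighted square summability at every order s ≥ 0
        (∀ s : ℝ, 0 ≤ s →
          Summable fun k : Fin d → ℤ => (1 + knorm d k ^ 2) ^ s * (F k) ^ 2) ∧
        -- H^s bound for the stationary corrector whenever b ∈ L²
        (∀ bc : (Fin d → ℤ) → ℂ, Summable (fun k => ‖bc k‖ ^ 2) →
          ∀ s : ℝ, 0 ≤ s →
            Summable fun k : Fin d → ℤ =>
              (1 + knorm d k ^ 2) ^ s * ‖-(F k : ℂ) * bc k‖ ^ 2)) := by
  set ε := α₀ - hbar with hεdef
  have hεpos : 0 < ε := by simp only [hεdef]; linarith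
  set C : ℝ := 2 * d * M ^ 2 / δ + 1 with hCdef
  have hCpos : 0 < C := by positivity
  refine ⟨C, hCpos, ?_⟩
  intro V hV hnr F hF0 hFk
  -- nonnegativity of F
  have hFnn : ∀ k, 0 ≤ F k := by
    intro k
    by_cases hk : k = 0
    · simp [hk, hF0]
    · rw [hFk k hk]
      have : 0 < Real.cosh (h₀ * knorm d k) := Real.cosh_pos _
      positivity
  -- pointwise bound
  have hpt : ∀ k : Fin d → ℤ, F k ≤ C * knorm d k ^ 2 * Real.exp (-ε * knorm d k) := by
    intro k
    by_cases hk : k = 0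
    · subst hk; rw [hF0]; positivity
    · set x := knorm d k with hxdef
      have hx : 0 ≤ x := knorm_nonneg d k
      have hVsq : ∑ i, (V i) ^ 2 ≤ d * M ^ 2 := by
        have hVi : ∀ i, (V i) ^ 2 ≤ M ^ 2 := by
          intro i
          have h1 : ‖V i‖ ≤ ‖fun i => V i‖ := norm_le_pi_norm (fun i => V i) i
          have h2 : |V i| ≤ M := by
            rw [Real.norm_eq_abs] at h1; exact h1.trans hV
          nlinarith [abs_nonneg (V i), sq_abs (V i)]
        calc ∑ i, (V i) ^ 2 ≤ ∑ _i : Fin d, M ^ 2 := Finset.sum_le_sum fun i _ => hVi i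
          _ = d * M ^ 2 := by simp [Finset.sum_const, nsmul_eq_mul]
      have hCS : (∑ i, (k i : ℝ) * V i) ^ 2 ≤ x ^ 2 * (d * M ^ 2) := by
        have h1 := Finset.sum_mul_sq_le_sq_mul_sq Finset.univ (fun i => ((k i : ℝ))) V
        have h2 : (0:ℝ) ≤ ∑ i, ((k i : ℝ)) ^ 2 := by positivity
        rw [sq_knorm]
        calc (∑ i, (k i : ℝ) * V i) ^ 2 ≤ (∑ i, ((k i : ℝ)) ^ 2) * ∑ i, (V i) ^ 2 := h1
          _ ≤ (∑ i, ((k i : ℝ)) ^ 2) * (d * M ^ 2) := by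
              apply mul_le_mul_of_nonneg_left hVsq h2
      have hsech : 1 / Real.cosh (h₀ * x) ≤ 2 * Real.exp (-α₀ * x) := by
        have hc : Real.exp (h₀ * x) / 2 ≤ Real.cosh (h₀ * x) := by
          rw [Real.cosh_eq]
          nlinarith [Real.exp_pos (-(h₀ * x))]
        have h4 : 1 / Real.cosh (h₀ * x) ≤ 1 / (Real.exp (h₀ * x) / 2) :=
          one_div_le_one_div_of_le (by positivity) hc
        have h5 : 1 / (Real.exp (h₀ * x) / 2) = 2 * Real.exp (-(h₀ * x)) := by
          rw [Real.exp_neg]; field_simp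
        have h6 : Real.exp (-(h₀ * x)) ≤ Real.exp (-α₀ * x) := by
          apply Real.exp_le_exp.mpr; nlinarith
        calc 1 / Real.cosh (h₀ * x) ≤ 2 * Real.exp (-(h₀ * x)) := by rw [← h5]; exact h4
          _ ≤ 2 * Real.exp (-α₀ * x) := by linarith
      have hden : δ * Real.exp (-hbar * x) ≤
          |x * Real.tanh (h₀ * x) - (∑ i, (k i : ℝ) * V i) ^ 2| := by
        rw [abs_sub_comm]; exact (hnr k hk).le
      have hnum : (∑ i, (k i : ℝ) * V i) ^ 2 * (1 / Real.cosh (h₀ * x)) ≤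
          x ^ 2 * (d * M ^ 2) * (2 * Real.exp (-α₀ * x)) := by
        have hcpos : (0:ℝ) < Real.cosh (h₀ * x) := Real.cosh_pos _
        apply mul_le_mul hCS hsech (by positivity) (by positivity)
      have hstep : F k ≤ (x ^ 2 * (d * M ^ 2) * (2 * Real.exp (-α₀ * x))) /
          (δ * Real.exp (-hbar * x)) := by
        rw [hFk k hk]
        exact div_le_div₀ (by positivity) hnum (by positivity) hden
      have hexp : Real.exp (-α₀ * x) / Real.exp (-hbar * x) = Real.exp (-ε * x) := by
        rw [← Real.exp_sub]; congr 1; simp only [hεdef]; ring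
      have hrhs : (x ^ 2 * (d * M ^ 2) * (2 * Real.exp (-α₀ * x))) /
          (δ * Real.exp (-hbar * x)) = (2 * d * M ^ 2 / δ) * x ^ 2 * Real.exp (-ε * x) := by
        rw [← hexp]
        have h1 : Real.exp (-hbar * x) ≠ 0 := (Real.exp_pos _).ne'
        field_simp
      rw [hrhs] at hstep
      have hfin : (2 * d * M ^ 2 / δ) * x ^ 2 * Real.exp (-ε * x) ≤
          C * x ^ 2 * Real.exp (-ε * x) := by
        apply mul_le_mul_of_nonneg_right _ (Real.exp_pos _).le
        apply mul_le_mul_of_nonneg_right _ (by positivity)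
        simp only [hCdef]; linarith
      exact hstep.trans hfin
  -- a uniform product-exponential bound for the weighted squares
  have hmain : ∀ s : ℝ, 0 ≤ s → ∃ A > (0:ℝ),
      ∀ k : Fin d → ℤ, (1 + knorm d k ^ 2) ^ s * (F k) ^ 2 ≤
        A * ∏ i, Real.exp (-(ε / (d + 1)) * |(k i : ℝ)|) := by
    intro s hs
    obtain ⟨A, hA, hAb⟩ := weight_bound s ε hs hεpos
    refine ⟨C ^ 2 * A, by positivity, fun k => ?_⟩
    set x := knorm d k with hxdef
    have hx : 0 ≤ x := knorm_nonneg d k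
    have hF2 : (F k) ^ 2 ≤ (C * x ^ 2 * Real.exp (-ε * x)) ^ 2 :=
      pow_le_pow_left₀ (hFnn k) (hpt k) 2
    have hw : (0:ℝ) ≤ (1 + x ^ 2) ^ s := Real.rpow_nonneg (by positivity) s
    have h1 : (1 + x ^ 2) ^ s * (F k) ^ 2 ≤
        C ^ 2 * ((1 + x ^ 2) ^ s * x ^ 4 * Real.exp (-ε * x)) * Real.exp (-ε * x) := by
      have expand : (C * x ^ 2 * Real.exp (-ε * x)) ^ 2 =
          C ^ 2 * (x ^ 4 * (Real.exp (-ε * x) * Real.exp (-ε * x))) := by ring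
      calc (1 + x ^ 2) ^ s * (F k) ^ 2 ≤ (1 + x ^ 2) ^ s * (C * x ^ 2 * Real.exp (-ε * x)) ^ 2 :=
            mul_le_mul_of_nonneg_left hF2 hw
        _ = C ^ 2 * ((1 + x ^ 2) ^ s * x ^ 4 * Real.exp (-ε * x)) * Real.exp (-ε * x) := by
            rw [expand]; ring
    have h2 : C ^ 2 * ((1 + x ^ 2) ^ s * x ^ 4 * Real.exp (-ε * x)) * Real.exp (-ε * x) ≤
        C ^ 2 * A * Real.exp (-ε * x) := by
      apply mul_le_mul_of_nonneg_right _ (Real.exp_pos _).le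
      exact mul_le_mul_of_nonneg_left (hAb x hx) (by positivity)
    have h3 : Real.exp (-ε * x) ≤ ∏ i, Real.exp (-(ε / (d + 1)) * |(k i : ℝ)|) := by
      rw [← Real.exp_sum]
      apply Real.exp_le_exp.mpr
      have hsum := sum_abs_le d k
      have : ∑ i, -(ε / (d + 1)) * |(k i : ℝ)| = -(ε / (d + 1)) * ∑ i, |(k i : ℝ)| := by
        rw [Finset.mul_sum]
      rw [this]
      have hd1 : (0:ℝ) < d + 1 := by positivity
      rw [neg_mul, neg_mul, neg_le_neg_iff]
      rw [div_mul_eq_mul_div, div_le_iff₀ hd1]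
      have habs : (0:ℝ) ≤ ∑ i, |(k i : ℝ)| := Finset.sum_nonneg fun i _ => abs_nonneg _
      nlinarith
    calc (1 + x ^ 2) ^ s * (F k) ^ 2 ≤ C ^ 2 * A * Real.exp (-ε * x) := h1.trans h2
      _ ≤ C ^ 2 * A * ∏ i, Real.exp (-(ε / (d + 1)) * |(k i : ℝ)|) :=
          mul_le_mul_of_nonneg_left h3 (by positivity)
  refine ⟨fun k hk => hpt k, ?_, ?_⟩
  · intro s hs
    obtain ⟨A, hA, hbd⟩ := hmain s hs
    have hsum : Summable (fun k : Fin d → ℤ =>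
        A * ∏ i, Real.exp (-(ε / (d + 1)) * |(k i : ℝ)|)) :=
      Summable.mul_left A (summable_exp_pi d (ε / (d + 1)) (by positivity))
    exact Summable.of_nonneg_of_le
      (fun k => mul_nonneg (Real.rpow_nonneg (by positivity) s) (sq_nonneg _)) hbd hsum
  · intro bc hbc s hs
    obtain ⟨A, hA, hbd⟩ := hmain s hs
    have hnorm : ∀ k, ‖-(F k : ℂ) * bc k‖ ^ 2 = (F k) ^ 2 * ‖bc k‖ ^ 2 := by
      intro k
      rw [norm_mul, norm_neg, Complex.norm_real, Real.norm_eq_abs, abs_of_nonneg (hFnn k)]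
      ring
    have hboundk : ∀ k : Fin d → ℤ, (1 + knorm d k ^ 2) ^ s * (F k) ^ 2 ≤ A := by
      intro k
      refine (hbd k).trans ?_
      have : ∏ i, Real.exp (-(ε / (d + 1)) * |(k i : ℝ)|) ≤ 1 := by
        apply Finset.prod_le_one (fun i _ => (Real.exp_pos _).le)
        intro i _
        rw [Real.exp_le_one_iff, neg_mul]
        have h0 := abs_nonneg ((k i : ℝ))
        have hd1 : (0:ℝ) ≤ ε / (d + 1) := by positivity
        exact neg_nonpos.mpr (mul_nonneg hd1 h0)
      calc A * ∏ i, Real.exp (-(ε / (d + 1)) * |(k i : ℝ)|) ≤ A * 1 :=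
            mul_le_mul_of_nonneg_left this hA.le
        _ = A := mul_one A
    have hsum2 : Summable (fun k : Fin d → ℤ => A * ‖bc k‖ ^ 2) := hbc.mul_left A
    refine Summable.of_nonneg_of_le
      (fun k => mul_nonneg (Real.rpow_nonneg (by positivity) s) (sq_nonneg _))
      (fun k => ?_) hsum2
    rw [hnorm k]
    calc (1 + knorm d k ^ 2) ^ s * ((F k) ^ 2 * ‖bc k‖ ^ 2)
        = ((1 + knorm d k ^ 2) ^ s * (F k) ^ 2) * ‖bc k‖ ^ 2 := by ring
      _ ≤ A * ‖bc k‖ ^ 2 :=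
          mul_le_mul_of_nonneg_right (hboundk k) (sq_nonneg _)
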